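/- For any three proper metric monoids (G₁,δ₁), (G₂,δ₂), and (G₃,δ₃), the Gromov-Hausdorff monoid distance satisfies: Υ((G₁,δ₁),(G₂,δ₂)) ≤ √2/2, Υ((G₁,δ₁),(G₂,δ₂)) = Υ((G₂,δ₂),(G₁,δ₁)), and the triangle inequality Υ((G₁,δ₁),(G₃,δ₃)) ≤ Υ((G₁,δ₁),(G₂,δ₂)) + Υ((G₂,δ₂),(G₃,δ₃)). -/
import Mathlib


/-- `(ς, κ)` is an `r`-local `ε`-almost isometric isomorphism between the metric
monoids `G` and `H`. -/
def IsLocAlmostIsoIso {G H : Type*} [Monoid G] [MetricSpace G] [Monoid H] [MetricSpace H]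
    (ς : G → H) (κ : H → G) (ε r : ℝ) : Prop :=
  ς 1 = 1 ∧ κ 1 = 1 ∧
    (∀ g ∈ Metric.closedBall (1 : G) r, ∀ g' ∈ Metric.closedBall (1 : G) r,
      ∀ h ∈ Metric.closedBall (1 : H) r,
        |dist (ς g * ς g') h - dist (g * g') (κ h)| ≤ ε) ∧
    (∀ g ∈ Metric.closedBall (1 : H) r, ∀ g' ∈ Metric.closedBall (1 : H) r,
      ∀ h ∈ Metric.closedBall (1 : G) r,
        |dist (κ g * κ g') h - dist (g * g') (ς h)| ≤ ε)
/-- The Gromov-Hausdorff monoid distance `Υ` between two (proper) metric monoids: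
`min {√2/2, inf {ε > 0 : ∃ a (1/ε)-local ε-almost isometric isomorphism}}`. -/
noncomputable def Upsilon (G H : Type*) [Monoid G] [MetricSpace G] [Monoid H]
    [MetricSpace H] : ℝ :=
  sInf ({ε : ℝ | 0 < ε ∧ ∃ (ς : G → H) (κ : H → G), IsLocAlmostIsoIso ς κ ε (1 / ε)} ∪
    {Real.sqrt 2 / 2})

lemma IsLocAlmostIsoIso.symm {G H : Type*} [Monoid G] [MetricSpace G] [Monoid H]
    [MetricSpace H] {ς : G → H} {κ : H → G} {ε r : ℝ}
    (h : IsLocAlmostIsoIso ς κ ε r) : IsLocAlmostIsoIso κ ς ε r :=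
  ⟨h.2.1, h.1, h.2.2.2, h.2.2.1⟩

lemma IsLocAlmostIsoIso.ball_map {G H : Type*} [Monoid G] [MetricSpace G] [Monoid H]
    [MetricSpace H] {ς : G → H} {κ : H → G} {ε r : ℝ}
    (h : IsLocAlmostIsoIso ς κ ε r) (hr : 0 ≤ r) {g : G}
    (hg : g ∈ Metric.closedBall (1 : G) r) : dist (ς g) 1 ≤ dist g 1 + ε := by
  have h1G : (1 : G) ∈ Metric.closedBall (1 : G) r := Metric.mem_closedBall_self hr
  have h1H : (1 : H) ∈ Metric.closedBall (1 : H) r := Metric.mem_closedBall_self hr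
  have t := h.2.2.1 g hg 1 h1G 1 h1H
  rw [h.1, h.2.1, mul_one, mul_one] at t
  have := abs_le.1 t
  linarith [this.1, this.2]

lemma key_ineq {ε₁ ε₂ : ℝ} (hε₁ : 0 < ε₁) (hε₂ : 0 < ε₂) (hsle : ε₁ + ε₂ ≤ 1) :
    1 / (ε₁ + ε₂) + ε₁ ≤ 1 / ε₂ := by
  have hs : (0:ℝ) < ε₁ + ε₂ := by linarith
  have e1 : 1 / (ε₁ + ε₂) * (ε₁ + ε₂) = 1 := one_div_mul_cancel hs.ne'
  have e2 : 1 / ε₂ * ε₂ = 1 := one_div_mul_cancel hε₂.ne'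
  rw [← sub_nonneg]
  have e3 : 1 / ε₂ - (1 / (ε₁ + ε₂) + ε₁) = ε₁ * (1 - ε₂ * (ε₁ + ε₂)) / (ε₂ * (ε₁ + ε₂)) := by
    field_simp; ring
  rw [e3]
  exact div_nonneg (mul_nonneg hε₁.le (by nlinarith)) (by positivity)

lemma key_comp {G₁ G₂ G₃ : Type*} [Monoid G₁] [MetricSpace G₁] [Monoid G₂] [MetricSpace G₂]
    [Monoid G₃] [MetricSpace G₃] {ς₁ : G₁ → G₂} {κ₁ : G₂ → G₁} {ς₂ : G₂ → G₃} {κ₂ : G₃ → G₂}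
    {ε₁ ε₂ : ℝ}
    (h1 : IsLocAlmostIsoIso ς₁ κ₁ ε₁ (1/ε₁)) (h2 : IsLocAlmostIsoIso ς₂ κ₂ ε₂ (1/ε₂))
    (hε₁ : 0 < ε₁) (hε₂ : 0 < ε₂) (hsle : ε₁ + ε₂ ≤ 1) :
    ∀ g ∈ Metric.closedBall (1 : G₁) (1/(ε₁+ε₂)), ∀ g' ∈ Metric.closedBall (1 : G₁) (1/(ε₁+ε₂)),
      ∀ h ∈ Metric.closedBall (1 : G₃) (1/(ε₁+ε₂)),
        |dist (ς₂ (ς₁ g) * ς₂ (ς₁ g')) h - dist (g * g') (κ₁ (κ₂ h))| ≤ ε₁ + ε₂ := by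
  intro g hg g' hg' h hh
  have hs : (0:ℝ) < ε₁ + ε₂ := by linarith
  have hr1 : 1/(ε₁+ε₂) ≤ 1/ε₁ := one_div_le_one_div_of_le hε₁ (by linarith)
  have hr2 : 1/(ε₁+ε₂) ≤ 1/ε₂ := one_div_le_one_div_of_le hε₂ (by linarith)
  have hA : 1/(ε₁+ε₂) + ε₁ ≤ 1/ε₂ := key_ineq hε₁ hε₂ hsle
  have hB : 1/(ε₁+ε₂) + ε₂ ≤ 1/ε₁ := by
    have := key_ineq hε₂ hε₁ (by linarith)
    rwa [add_comm ε₂ ε₁] at this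
  have sub1 : Metric.closedBall (1 : G₁) (1/(ε₁+ε₂)) ⊆ Metric.closedBall (1 : G₁) (1/ε₁) :=
    Metric.closedBall_subset_closedBall hr1
  have sub2 : Metric.closedBall (1 : G₃) (1/(ε₁+ε₂)) ⊆ Metric.closedBall (1 : G₃) (1/ε₂) :=
    Metric.closedBall_subset_closedBall hr2
  have hr1pos : (0:ℝ) ≤ 1/ε₁ := by positivity
  have hr2pos : (0:ℝ) ≤ 1/ε₂ := by positivity
  have hςg : ς₁ g ∈ Metric.closedBall (1 : G₂) (1/ε₂) := by
    rw [Metric.mem_closedBall]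
    have := h1.ball_map hr1pos (sub1 hg)
    have hd : dist g 1 ≤ 1/(ε₁+ε₂) := Metric.mem_closedBall.1 hg
    linarith
  have hςg' : ς₁ g' ∈ Metric.closedBall (1 : G₂) (1/ε₂) := by
    rw [Metric.mem_closedBall]
    have := h1.ball_map hr1pos (sub1 hg')
    have hd : dist g' 1 ≤ 1/(ε₁+ε₂) := Metric.mem_closedBall.1 hg'
    linarith
  have hκh : κ₂ h ∈ Metric.closedBall (1 : G₂) (1/ε₁) := by
    rw [Metric.mem_closedBall]
    have := h2.symm.ball_map hr2pos (sub2 hh)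
    have hd : dist h 1 ≤ 1/(ε₁+ε₂) := Metric.mem_closedBall.1 hh
    linarith
  have t2 := h2.2.2.1 (ς₁ g) hςg (ς₁ g') hςg' h (sub2 hh)
  have t1 := h1.2.2.1 g (sub1 hg) g' (sub1 hg') (κ₂ h) hκh
  calc |dist (ς₂ (ς₁ g) * ς₂ (ς₁ g')) h - dist (g * g') (κ₁ (κ₂ h))|
      ≤ |dist (ς₂ (ς₁ g) * ς₂ (ς₁ g')) h - dist (ς₁ g * ς₁ g') (κ₂ h)|
        + |dist (ς₁ g * ς₁ g') (κ₂ h) - dist (g * g') (κ₁ (κ₂ h))| := abs_sub_le _ _ _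
    _ ≤ ε₁ + ε₂ := by linarith

lemma comp_iso {G₁ G₂ G₃ : Type*} [Monoid G₁] [MetricSpace G₁] [Monoid G₂] [MetricSpace G₂]
    [Monoid G₃] [MetricSpace G₃] {ς₁ : G₁ → G₂} {κ₁ : G₂ → G₁} {ς₂ : G₂ → G₃} {κ₂ : G₃ → G₂}
    {ε₁ ε₂ : ℝ}
    (h1 : IsLocAlmostIsoIso ς₁ κ₁ ε₁ (1/ε₁)) (h2 : IsLocAlmostIsoIso ς₂ κ₂ ε₂ (1/ε₂))
    (hε₁ : 0 < ε₁) (hε₂ : 0 < ε₂) (hsle : ε₁ + ε₂ ≤ 1) :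
    IsLocAlmostIsoIso (ς₂ ∘ ς₁) (κ₁ ∘ κ₂) (ε₁ + ε₂) (1/(ε₁+ε₂)) := by
  refine ⟨by simp [Function.comp, h1.1, h2.1], by simp [Function.comp, h1.2.1, h2.2.1], ?_, ?_⟩
  · intro g hg g' hg' h hh
    exact key_comp h1 h2 hε₁ hε₂ hsle g hg g' hg' h hh
  · intro g hg g' hg' h hh
    have := key_comp h2.symm h1.symm hε₂ hε₁ (by linarith) g (by rwa [add_comm ε₂ ε₁])
      g' (by rwa [add_comm ε₂ ε₁]) h (by rwa [add_comm ε₂ ε₁])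
    rwa [add_comm ε₂ ε₁] at this

lemma upsilon_bdd (G H : Type*) [Monoid G] [MetricSpace G] [Monoid H] [MetricSpace H] :
    BddBelow ({ε : ℝ | 0 < ε ∧ ∃ (ς : G → H) (κ : H → G), IsLocAlmostIsoIso ς κ ε (1 / ε)} ∪
      {Real.sqrt 2 / 2}) := by
  refine ⟨0, fun x hx => ?_⟩
  rcases hx with hx | hx
  · exact hx.1.le
  · rw [Set.mem_singleton_iff] at hx
    rw [hx]; positivity

lemma upsilon_le (G H : Type*) [Monoid G] [MetricSpace G] [Monoid H] [MetricSpace H] :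
    Upsilon G H ≤ Real.sqrt 2 / 2 :=
  csInf_le (upsilon_bdd G H) (Or.inr rfl)

lemma upsilon_nonneg (G H : Type*) [Monoid G] [MetricSpace G] [Monoid H] [MetricSpace H] :
    0 ≤ Upsilon G H := by
  refine le_csInf ⟨Real.sqrt 2 / 2, Or.inr rfl⟩ fun x hx => ?_
  rcases hx with hx | hx
  · exact hx.1.le
  · rw [Set.mem_singleton_iff] at hx
    rw [hx]; positivity

lemma upsilon_symm (G H : Type*) [Monoid G] [MetricSpace G] [Monoid H] [MetricSpace H] :
    Upsilon G H = Upsilon H G := by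
  unfold Upsilon
  congr 1
  ext ε
  simp only [Set.mem_union, Set.mem_setOf_eq]
  constructor
  · rintro (⟨hε, ς, κ, h⟩ | h)
    · exact Or.inl ⟨hε, κ, ς, h.symm⟩
    · exact Or.inr h
  · rintro (⟨hε, ς, κ, h⟩ | h)
    · exact Or.inl ⟨hε, κ, ς, h.symm⟩
    · exact Or.inr h

/-- For proper metric monoids, the Gromov-Hausdorff monoid
distance `Υ` is bounded by `√2/2`, is symmetric, and satisfies the triangle
inequality. -/
theorem upsilon_metric_properties
    (G₁ G₂ G₃ : Type*) [Monoid G₁] [MetricSpace G₁] [Monoid G₂] [MetricSpace G₂]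
    [Monoid G₃] [MetricSpace G₃]
    (h_left₁ : ∀ g h k : G₁, dist (g * h) (g * k) = dist h k)
    (h_cont₁ : Continuous fun p : G₁ × G₁ => p.1 * p.2)
    (h_proper₁ : ProperSpace G₁)
    (h_left₂ : ∀ g h k : G₂, dist (g * h) (g * k) = dist h k)
    (h_cont₂ : Continuous fun p : G₂ × G₂ => p.1 * p.2)
    (h_proper₂ : ProperSpace G₂)
    (h_left₃ : ∀ g h k : G₃, dist (g * h) (g * k) = dist h k)
    (h_cont₃ : Continuous fun p : G₃ × G₃ => p.1 * p.2)
    (h_proper₃ : ProperSpace G₃) :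
    Upsilon G₁ G₂ ≤ Real.sqrt 2 / 2 ∧
      Upsilon G₁ G₂ = Upsilon G₂ G₁ ∧
      Upsilon G₁ G₃ ≤ Upsilon G₁ G₂ + Upsilon G₂ G₃ := by
  refine ⟨upsilon_le G₁ G₂, upsilon_symm G₁ G₂, ?_⟩
  set a := Upsilon G₁ G₂ with ha
  set b := Upsilon G₂ G₃ with hb
  have ha0 : 0 ≤ a := upsilon_nonneg G₁ G₂
  have hb0 : 0 ≤ b := upsilon_nonneg G₂ G₃
  have hc1 : Real.sqrt 2 / 2 ≤ 1 := by
    have : Real.sqrt 2 ≤ 2 := by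
      nlinarith [Real.sq_sqrt (show (0:ℝ) ≤ 2 by norm_num), Real.sqrt_nonneg 2]
    linarith
  refine le_of_forall_pos_le_add fun η hη => ?_
  by_cases hcase : Real.sqrt 2 / 2 ≤ a + b + η
  · exact (upsilon_le G₁ G₃).trans hcase
  push_neg at hcase
  -- extract witnesses
  have hne12 : ({ε : ℝ | 0 < ε ∧ ∃ (ς : G₁ → G₂) (κ : G₂ → G₁), IsLocAlmostIsoIso ς κ ε (1 / ε)}
      ∪ {Real.sqrt 2 / 2}).Nonempty := ⟨Real.sqrt 2 / 2, Or.inr rfl⟩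
  have hne23 : ({ε : ℝ | 0 < ε ∧ ∃ (ς : G₂ → G₃) (κ : G₃ → G₂), IsLocAlmostIsoIso ς κ ε (1 / ε)}
      ∪ {Real.sqrt 2 / 2}).Nonempty := ⟨Real.sqrt 2 / 2, Or.inr rfl⟩
  obtain ⟨x, hxmem, hxlt⟩ := exists_lt_of_csInf_lt hne12
    (show Upsilon G₁ G₂ < a + η/2 by rw [← ha]; linarith)
  obtain ⟨y, hymem, hylt⟩ := exists_lt_of_csInf_lt hne23
    (show Upsilon G₂ G₃ < b + η/2 by rw [← hb]; linarith)
  have hxS : x ∈ {ε : ℝ | 0 < ε ∧ ∃ (ς : G₁ → G₂) (κ : G₂ → G₁),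
      IsLocAlmostIsoIso ς κ ε (1 / ε)} := by
    rcases hxmem with h | h
    · exact h
    · rw [Set.mem_singleton_iff] at h
      exfalso; rw [h] at hxlt; linarith
  have hyS : y ∈ {ε : ℝ | 0 < ε ∧ ∃ (ς : G₂ → G₃) (κ : G₃ → G₂),
      IsLocAlmostIsoIso ς κ ε (1 / ε)} := by
    rcases hymem with h | h
    · exact h
    · rw [Set.mem_singleton_iff] at h
      exfalso; rw [h] at hylt; linarith
  obtain ⟨hx0, ς₁, κ₁, h1⟩ := hxS
  obtain ⟨hy0, ς₂, κ₂, h2⟩ := hyS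
  have hsum1 : x + y ≤ 1 := by linarith
  have hcomp := comp_iso h1 h2 hx0 hy0 hsum1
  have hmem : x + y ∈ ({ε : ℝ | 0 < ε ∧ ∃ (ς : G₁ → G₃) (κ : G₃ → G₁),
      IsLocAlmostIsoIso ς κ ε (1 / ε)} ∪ {Real.sqrt 2 / 2}) :=
    Or.inl ⟨by linarith, ς₂ ∘ ς₁, κ₁ ∘ κ₂, hcomp⟩
  have := csInf_le (upsilon_bdd G₁ G₃) hmem
  calc Upsilon G₁ G₃ ≤ x + y := this
    _ ≤ a + b + η := by linarith
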